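/- Let β > 0, μ > 0, p ∈ (0,1). For all real S0 and all A > 0, the Dulac expression ∂/∂S0[(1/A)(μ - βS0A - μS0)] + ∂/∂A[(1/A)(β(1 - (1-p)S0 - A)A - μA)] equals -2β - μ/A, which is strictly negative. -/

import Mathlib

/-- For the permanent adoption model with Dulac function 1/A, the Dulac
expression equals `-2β - μ/A`, which is strictly negative. -/
theorem stmt_0 (β μ p : ℝ) (hβ : 0 < β) (hμ : 0 < μ) (hp : p ∈ Set.Ioo (0:ℝ) 1)
    (S0 : ℝ) (A : ℝ) (hA : 0 < A) :
    deriv (fun s : ℝ => (1 / A) * (μ - β * s * A - μ * s)) S0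
      + deriv (fun a : ℝ => (1 / a) * (β * (1 - (1 - p) * S0 - a) * a - μ * a)) A
      = -2 * β - μ / A ∧ -2 * β - μ / A < 0 := by
  have hA' : A ≠ 0 := ne_of_gt hA
  have h1 : deriv (fun s : ℝ => (1 / A) * (μ - β * s * A - μ * s)) S0 = -β - μ / A := by
    have : HasDerivAt (fun s : ℝ => (1 / A) * (μ - β * s * A - μ * s))
        ((1 / A) * (0 - β * A - μ)) S0 := by
      have h : HasDerivAt (fun s : ℝ => μ - β * s * A - μ * s) (0 - β * A - μ) S0 := by
        have := (((hasDerivAt_id S0).const_mul β).mul_const A).const_sub μ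
        simpa [Pi.sub_def] using this.sub ((hasDerivAt_id S0).const_mul μ)
      exact h.const_mul _
    rw [this.deriv]
    field_simp
    ring
  have h2 : deriv (fun a : ℝ => (1 / a) * (β * (1 - (1 - p) * S0 - a) * a - μ * a)) A = -β := by
    have heq : (fun a : ℝ => (1 / a) * (β * (1 - (1 - p) * S0 - a) * a - μ * a))
        =ᶠ[nhds A] (fun a : ℝ => β * (1 - (1 - p) * S0 - a) - μ) := by
      filter_upwards [eventually_ne_nhds hA'] with a ha
      field_simp
    rw [heq.deriv_eq]
    have h : HasDerivAt (fun a : ℝ => β * (1 - (1 - p) * S0 - a) - μ) (β * (0 - 1) - 0) A := by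
      have := (((hasDerivAt_id A).const_sub (1 - (1 - p) * S0)).const_mul β)
      simpa using this.sub_const μ
    rw [h.deriv]; ring
  refine ⟨by rw [h1, h2]; ring, ?_⟩
  have : 0 < μ / A := div_pos hμ hA
  linarith
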